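/- Let t ≥ 3 and let U_1, …, U_t be subspaces of V. For any two distinct indices i ≠ j in {1,…,t}, if W_i is an admissible complement at i and W_j is an admissible complement at j, then W_i ⊓ W_j = 0 (any two admissible complements are linearly independent, regardless of how they are chosen). -/
import Mathlib


open Module

/-- `A_k := U_k ⊓ (⊔_{j ≠ k} U_j)`. -/
def subA {F V : Type*} [Field F] [AddCommGroup V] [Module F V] {t : ℕ}
    (U : Fin t → Submodule F V) (k : Fin t) : Submodule F V :=
  U k ⊓ (⨆ j : Fin t, ⨆ _ : j ≠ k, U j)

/-- `C_k := ⊔_{ℓ ≠ k} ( U_k ⊓ (⊔_{j ∉ {k,ℓ}} U_j) )`. -/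
def subC {F V : Type*} [Field F] [AddCommGroup V] [Module F V] {t : ℕ}
    (U : Fin t → Submodule F V) (k : Fin t) : Submodule F V :=
  ⨆ l : Fin t, ⨆ _ : l ≠ k,
    (U k ⊓ (⨆ j : Fin t, ⨆ _ : j ≠ k ∧ j ≠ l, U j))

/-- `W` is an admissible complement at `k`: `W ≤ A_k`, `W ⊓ C_k = 0`, `W ⊔ C_k = A_k`. -/
def IsAdmissibleComplement {F V : Type*} [Field F] [AddCommGroup V] [Module F V] {t : ℕ}
    (U : Fin t → Submodule F V) (k : Fin t) (W : Submodule F V) : Prop :=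
  W ≤ subA U k ∧ W ⊓ subC U k = ⊥ ∧ W ⊔ subC U k = subA U k

theorem stmt_2 (F V : Type*) [Field F] [AddCommGroup V] [Module F V]
    [FiniteDimensional F V] (t : ℕ) (ht : 3 ≤ t) (U : Fin t → Submodule F V)
    (i j : Fin t) (hij : i ≠ j) (Wi Wj : Submodule F V)
    (hWi : IsAdmissibleComplement U i Wi) (hWj : IsAdmissibleComplement U j Wj) :
    Wi ⊓ Wj = ⊥ := by
  obtain ⟨hWiA, hWiC, -⟩ := hWi
  obtain ⟨hWjA, -, -⟩ := hWj
  have hl : ∃ l : Fin t, l ≠ i ∧ l ≠ j := by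
    have h2 : ({i, j} : Finset (Fin t)).card ≤ 2 :=
      (Finset.card_insert_le _ _).trans (by simp)
    have hne : (({i, j} : Finset (Fin t))ᶜ).Nonempty := by
      rw [← Finset.card_pos, Finset.card_compl, Fintype.card_fin]
      omega
    obtain ⟨l, hl⟩ := hne
    simp only [Finset.mem_compl, Finset.mem_insert, Finset.mem_singleton, not_or] at hl
    exact ⟨l, hl⟩
  obtain ⟨l, hli, hlj⟩ := hl
  rw [← le_bot_iff, ← hWiC]
  refine le_inf inf_le_left ?_
  have hWiU : Wi ≤ U i := hWiA.trans inf_le_left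
  have hWjU : Wj ≤ U j := hWjA.trans inf_le_left
  have hUj : U j ≤ ⨆ k : Fin t, ⨆ _ : k ≠ i ∧ k ≠ l, U k :=
    le_iSup₂ (f := fun k (_ : k ≠ i ∧ k ≠ l) => U k) j ⟨hij.symm, hlj.symm⟩
  have hkey : Wi ⊓ Wj ≤ U i ⊓ (⨆ k : Fin t, ⨆ _ : k ≠ i ∧ k ≠ l, U k) :=
    inf_le_inf hWiU (hWjU.trans hUj)
  exact hkey.trans (le_iSup₂ (f := fun l (_ : l ≠ i) =>
    U i ⊓ (⨆ k : Fin t, ⨆ _ : k ≠ i ∧ k ≠ l, U k)) l hli)
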